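/- Let u : X → ℝ be a nonnegative measurable function with ∫_X u² dμ = ρ, and let ε ∈ (0, 1]. Then ∫_X (u+ε)^{−r} · u dμ ≤ ∫_X (u+ε)^{1−r} dμ ≤ 2^{1−r} μ(X) + 2^{1−r} μ(X)^{(1+r)/2} ρ^{(1−r)/2}. -/

import Mathlib

open MeasureTheory Set
open scoped NNReal ENNReal

/-- If u : X → ℝ is a nonnegative measurable function with ∫ u² dμ = ρ on a
finite measure space and ε ∈ (0,1], then
∫ (u+ε)^{−r} u dμ ≤ ∫ (u+ε)^{1−r} dμ ≤ 2^{1−r} μ(X) + 2^{1−r} μ(X)^{(1+r)/2} ρ^{(1−r)/2}. -/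
theorem stmt_6 {X : Type*} [MeasurableSpace X] (μ : Measure X) [IsFiniteMeasure μ]
    (r : ℝ) (hr0 : 0 < r) (hr1 : r < 1) (ρ : ℝ) (hρ : 0 ≤ ρ)
    (u : X → ℝ) (hu : Measurable u) (hnn : ∀ x, 0 ≤ u x)
    (hmass : ∫⁻ x, ENNReal.ofReal ((u x) ^ 2) ∂μ = ENNReal.ofReal ρ)
    (ε : ℝ) (hε : ε ∈ Ioc (0 : ℝ) 1) :
    (∫⁻ x, ENNReal.ofReal ((u x + ε) ^ (-r) * u x) ∂μ
        ≤ ∫⁻ x, ENNReal.ofReal ((u x + ε) ^ (1 - r)) ∂μ) ∧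
      ∫⁻ x, ENNReal.ofReal ((u x + ε) ^ (1 - r)) ∂μ
        ≤ ENNReal.ofReal (2 ^ (1 - r) * (μ univ).toReal
            + 2 ^ (1 - r) * (μ univ).toReal ^ ((1 + r) / 2) * ρ ^ ((1 - r) / 2)) := by
  obtain ⟨hε0, hε1⟩ := hε
  have h1r : (0:ℝ) < 1 - r := by linarith
  constructor
  · refine lintegral_mono fun x => ENNReal.ofReal_le_ofReal ?_
    have hpos : 0 < u x + ε := by have := hnn x; linarith
    calc (u x + ε) ^ (-r) * u x
        ≤ (u x + ε) ^ (-r) * (u x + ε) :=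
          mul_le_mul_of_nonneg_left (by linarith) (Real.rpow_nonneg hpos.le _)
      _ = (u x + ε) ^ (1 - r) := by
          rw [show (1 - r) = -r + 1 by ring, Real.rpow_add hpos, Real.rpow_one]
  · set F : X → ENNReal := fun x => ENNReal.ofReal (u x) with hF
    have hFmeas : Measurable F := hu.ennreal_ofReal
    have hpt : ∀ x, ENNReal.ofReal ((u x + ε) ^ (1 - r))
        ≤ ENNReal.ofReal (2 ^ (1 - r)) * (1 + F x ^ (1 - r)) := by
      intro x
      have hx := hnn x
      have h2 : (1:ℝ) ≤ 2 ^ (1 - r) := Real.one_le_rpow one_le_two h1r.le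
      have hb : (u x + ε) ^ (1 - r) ≤ u x ^ (1 - r) + 1 := by
        have hsub : (u x + ε) ^ (1 - r) ≤ u x ^ (1 - r) + ε ^ (1 - r) := by
          have := NNReal.rpow_add_le_add_rpow (Real.toNNReal (u x)) (Real.toNNReal ε)
            h1r.le (by linarith : 1 - r ≤ 1)
          have h1 : ((Real.toNNReal (u x) + Real.toNNReal ε : ℝ≥0) : ℝ) = u x + ε := by
            push_cast [Real.coe_toNNReal _ hx, Real.coe_toNNReal _ hε0.le]
            ring
          calc (u x + ε) ^ (1 - r)
              = ((Real.toNNReal (u x) + Real.toNNReal ε : ℝ≥0) : ℝ) ^ (1 - r) := by rw [h1]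
            _ = (((Real.toNNReal (u x) + Real.toNNReal ε) ^ (1 - r) : ℝ≥0) : ℝ) := by
                rw [NNReal.coe_rpow]
            _ ≤ ((Real.toNNReal (u x) ^ (1 - r) + Real.toNNReal ε ^ (1 - r) : ℝ≥0) : ℝ) := by
                exact_mod_cast this
            _ = u x ^ (1 - r) + ε ^ (1 - r) := by
                push_cast [NNReal.coe_rpow]
                push_cast [Real.coe_toNNReal _ hx, Real.coe_toNNReal _ hε0.le]
                ring
        have : ε ^ (1 - r) ≤ 1 := Real.rpow_le_one hε0.le hε1 h1r.le
        linarith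
      calc ENNReal.ofReal ((u x + ε) ^ (1 - r))
          ≤ ENNReal.ofReal (2 ^ (1 - r) * (1 + u x ^ (1 - r))) := by
            apply ENNReal.ofReal_le_ofReal
            have hunn : 0 ≤ u x ^ (1 - r) := Real.rpow_nonneg hx _
            nlinarith
        _ = ENNReal.ofReal (2 ^ (1 - r)) * (1 + F x ^ (1 - r)) := by
            rw [ENNReal.ofReal_mul (by positivity),
              ENNReal.ofReal_add zero_le_one (Real.rpow_nonneg hx _),
              ENNReal.ofReal_one, ← ENNReal.ofReal_rpow_of_nonneg hx h1r.le]
    have hint : ∫⁻ x, ENNReal.ofReal ((u x + ε) ^ (1 - r)) ∂μ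
        ≤ ENNReal.ofReal (2 ^ (1 - r)) * (μ univ + ∫⁻ x, F x ^ (1 - r) ∂μ) := by
      calc ∫⁻ x, ENNReal.ofReal ((u x + ε) ^ (1 - r)) ∂μ
          ≤ ∫⁻ x, ENNReal.ofReal (2 ^ (1 - r)) * (1 + F x ^ (1 - r)) ∂μ :=
            lintegral_mono hpt
        _ = ENNReal.ofReal (2 ^ (1 - r)) * ∫⁻ x, (1 + F x ^ (1 - r)) ∂μ := by
            rw [lintegral_const_mul _ (by fun_prop)]
        _ = ENNReal.ofReal (2 ^ (1 - r)) * (μ univ + ∫⁻ x, F x ^ (1 - r) ∂μ) := by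
            rw [lintegral_add_left measurable_const, lintegral_one]
    have hholder : ∫⁻ x, F x ^ (1 - r) ∂μ
        ≤ (ENNReal.ofReal ρ) ^ ((1 - r) / 2) * (μ univ) ^ ((1 + r) / 2) := by
      have hpq : Real.HolderConjugate (2 / (1 - r)) (2 / (1 + r)) := by
        rw [Real.holderConjugate_iff]; constructor
        · rw [lt_div_iff₀ h1r]; linarith
        · rw [inv_div, inv_div]; field_simp; ring
      have := ENNReal.lintegral_mul_le_Lp_mul_Lq μ hpq
        (f := fun x => F x ^ (1 - r)) (g := fun _ => 1)
        ((hFmeas.pow_const _).aemeasurable) aemeasurable_const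
      simp only [Pi.mul_apply, mul_one, ENNReal.one_rpow, lintegral_one,
        ENNReal.one_rpow] at this
      have hfp : ∀ x, (F x ^ (1 - r)) ^ (2 / (1 - r)) = ENNReal.ofReal (u x ^ 2) := by
        intro x
        rw [← ENNReal.rpow_mul]
        have : (1 - r) * (2 / (1 - r)) = 2 := by field_simp
        rw [this, hF, ENNReal.ofReal_rpow_of_nonneg (hnn x) (by norm_num : (0:ℝ) ≤ 2),
          show ((2:ℝ)) = ((2:ℕ):ℝ) by norm_num, Real.rpow_natCast]
      simp only [hfp] at this
      rw [hmass] at this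
      convert this using 2
      · rw [one_div_div]
      · rw [one_div_div]
    calc ∫⁻ x, ENNReal.ofReal ((u x + ε) ^ (1 - r)) ∂μ
        ≤ ENNReal.ofReal (2 ^ (1 - r)) *
            (μ univ + (ENNReal.ofReal ρ) ^ ((1 - r) / 2) * (μ univ) ^ ((1 + r) / 2)) :=
          hint.trans (mul_le_mul_right (add_le_add_right hholder _) _)
      _ = ENNReal.ofReal (2 ^ (1 - r) * (μ univ).toReal
            + 2 ^ (1 - r) * (μ univ).toReal ^ ((1 + r) / 2) * ρ ^ ((1 - r) / 2)) := by
          have hm : (μ univ) ≠ ⊤ := measure_ne_top μ univ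
          have htm : (0:ℝ) ≤ (μ univ).toReal := ENNReal.toReal_nonneg
          rw [ENNReal.ofReal_add (by positivity) (by positivity),
            ENNReal.ofReal_mul (by positivity), ENNReal.ofReal_mul (by positivity),
            ENNReal.ofReal_mul (by positivity),
            ← ENNReal.ofReal_rpow_of_nonneg htm (by positivity),
            ← ENNReal.ofReal_rpow_of_nonneg hρ (by positivity),
            ENNReal.ofReal_toReal hm]
          ring
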